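/- Correctness of normalization for SLC: for every term Γ ⊢ t : A of SLC there exists a normal form n with Γ ⊢nf n : A such that Γ ⊢ t ≡ n : A in the equational theory of SLC (viewing the normal form as a term via the evident embedding). -/

import Mathlib

/-- Types of SLC: base, unit, products, functions and the modal type ◇. -/
inductive Ty : Type
  | base : Ty
  | unit : Ty
  | prod : Ty → Ty → Ty
  | arr : Ty → Ty → Ty
  | dia : Ty → Ty

/-- Typing contexts (de Bruijn; the head is the most recently bound variable). -/
abbrev Ctx := List Ty

/-- Raw terms of SLC with de Bruijn indices. -/
inductive Tm : Type
  | var : ℕ → Tm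
  | unit : Tm
  | pair : Tm → Tm → Tm
  | fst : Tm → Tm
  | snd : Tm → Tm
  | lam : Tm → Tm
  | app : Tm → Tm → Tm
  | lett : Tm → Tm → Tm           -- let x = t in u (letmap)

/-- Lifting of a renaming under a binder. -/
def liftRen (ρ : ℕ → ℕ) : ℕ → ℕ
  | 0 => 0
  | n + 1 => ρ n + 1

/-- Renaming of the variables of a term. -/
def rename (ρ : ℕ → ℕ) : Tm → Tm
  | .var n => .var (ρ n)
  | .unit => .unit
  | .pair t u => .pair (rename ρ t) (rename ρ u)
  | .fst t => .fst (rename ρ t)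
  | .snd t => .snd (rename ρ t)
  | .lam t => .lam (rename (liftRen ρ) t)
  | .app t u => .app (rename ρ t) (rename ρ u)
  | .lett t u => .lett (rename ρ t) (rename (liftRen ρ) u)

/-- Capture-avoiding substitution of `u` for the variable `k`. -/
def subst (k : ℕ) (u : Tm) : Tm → Tm
  | .var n => if n < k then .var n else if n = k then rename (· + k) u else .var (n - 1)
  | .unit => .unit
  | .pair t t' => .pair (subst k u t) (subst k u t')
  | .fst t => .fst (subst k u t)
  | .snd t => .snd (subst k u t)
  | .lam t => .lam (subst (k + 1) u t)
  | .app t t' => .app (subst k u t) (subst k u t')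
  | .lett t t' => .lett (subst k u t) (subst (k + 1) u t')

/-- The typing judgment `Γ ⊢ t : A` of SLC, with the letmap rule. -/
inductive HasTy : Ctx → Tm → Ty → Prop
  | var {Γ n A} : Γ[n]? = some A → HasTy Γ (.var n) A
  | unit {Γ} : HasTy Γ .unit .unit
  | pair {Γ t u A B} : HasTy Γ t A → HasTy Γ u B → HasTy Γ (.pair t u) (.prod A B)
  | fst {Γ t A B} : HasTy Γ t (.prod A B) → HasTy Γ (.fst t) A
  | snd {Γ t A B} : HasTy Γ t (.prod A B) → HasTy Γ (.snd t) B
  | lam {Γ t A B} : HasTy (A :: Γ) t B → HasTy Γ (.lam t) (.arr A B)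
  | app {Γ t u A B} : HasTy Γ t (.arr A B) → HasTy Γ u A → HasTy Γ (.app t u) B
  | lett {Γ t u A B} : HasTy Γ t (.dia A) → HasTy (A :: Γ) u B →
      HasTy Γ (.lett t u) (.dia B)

/-- The equational theory `Γ ⊢ t ≡ u : A` of SLC: the congruence generated by
⊤-η, ×-β, ×-η, →-β, →-η, ◇-η and ◇-β. -/
inductive EqTm : Ctx → Tm → Tm → Ty → Prop
  | refl {Γ t A} : HasTy Γ t A → EqTm Γ t t A
  | symm {Γ t u A} : EqTm Γ t u A → EqTm Γ u t A
  | trans {Γ t u v A} : EqTm Γ t u A → EqTm Γ u v A → EqTm Γ t v A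
  | pair_congr {Γ t t' u u' A B} : EqTm Γ t t' A → EqTm Γ u u' B →
      EqTm Γ (.pair t u) (.pair t' u') (.prod A B)
  | fst_congr {Γ t t' A B} : EqTm Γ t t' (.prod A B) → EqTm Γ (.fst t) (.fst t') A
  | snd_congr {Γ t t' A B} : EqTm Γ t t' (.prod A B) → EqTm Γ (.snd t) (.snd t') B
  | lam_congr {Γ t t' A B} : EqTm (A :: Γ) t t' B → EqTm Γ (.lam t) (.lam t') (.arr A B)
  | app_congr {Γ t t' u u' A B} : EqTm Γ t t' (.arr A B) → EqTm Γ u u' A →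
      EqTm Γ (.app t u) (.app t' u') B
  | lett_congr {Γ t t' u u' A B} : EqTm Γ t t' (.dia A) → EqTm (A :: Γ) u u' B →
      EqTm Γ (.lett t u) (.lett t' u') (.dia B)
  | unit_eta {Γ t} : HasTy Γ t .unit → EqTm Γ t .unit .unit
  | prod_beta1 {Γ t u A B} : HasTy Γ t A → HasTy Γ u B →
      EqTm Γ (.fst (.pair t u)) t A
  | prod_beta2 {Γ t u A B} : HasTy Γ t A → HasTy Γ u B →
      EqTm Γ (.snd (.pair t u)) u B
  | prod_eta {Γ t A B} : HasTy Γ t (.prod A B) →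
      EqTm Γ t (.pair (.fst t) (.snd t)) (.prod A B)
  | arr_beta {Γ t u A B} : HasTy (A :: Γ) t B → HasTy Γ u A →
      EqTm Γ (.app (.lam t) u) (subst 0 u t) B
  | arr_eta {Γ t A B} : HasTy Γ t (.arr A B) →
      EqTm Γ t (.lam (.app (rename Nat.succ t) (.var 0))) (.arr A B)
  | dia_eta {Γ t A} : HasTy Γ t (.dia A) →
      EqTm Γ t (.lett t (.var 0)) (.dia A)
  | dia_beta {Γ t u u' A B C} : HasTy Γ t (.dia A) → HasTy (A :: Γ) u B →
      HasTy (B :: Γ) u' C →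
      EqTm Γ (.lett (.lett t u) u')
        (.lett t (subst 0 u (rename (liftRen Nat.succ) u'))) (.dia C)

mutual
  /-- Neutral terms `Γ ⊢ne n : A` of SLC. -/
  inductive Neu : Ctx → Tm → Ty → Prop
    | var {Γ n A} : Γ[n]? = some A → Neu Γ (.var n) A
    | fst {Γ t A B} : Neu Γ t (.prod A B) → Neu Γ (.fst t) A
    | snd {Γ t A B} : Neu Γ t (.prod A B) → Neu Γ (.snd t) B
    | app {Γ t u A B} : Neu Γ t (.arr A B) → Nf Γ u A → Neu Γ (.app t u) B

  /-- Normal forms `Γ ⊢nf n : A` of SLC. -/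
  inductive Nf : Ctx → Tm → Ty → Prop
    | up {Γ t} : Neu Γ t .base → Nf Γ t .base
    | unit {Γ} : Nf Γ .unit .unit
    | pair {Γ t u A B} : Nf Γ t A → Nf Γ u B → Nf Γ (.pair t u) (.prod A B)
    | lam {Γ t A B} : Nf (A :: Γ) t B → Nf Γ (.lam t) (.arr A B)
    | lett {Γ t u A B} : Neu Γ t (.dia A) → Nf (A :: Γ) u B →
        Nf Γ (.lett t u) (.dia B)
end

/-! ### Substitution calculus -/

theorem rename_ext {ρ ρ' : ℕ → ℕ} (h : ∀ n, ρ n = ρ' n) : ∀ t, rename ρ t = rename ρ' t := by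
  intro t
  induction t generalizing ρ ρ' with
  | var n => simp [rename, h]
  | unit => rfl
  | pair a b iha ihb => simp [rename, iha h, ihb h]
  | fst a ih => simp [rename, ih h]
  | snd a ih => simp [rename, ih h]
  | lam a ih =>
      simp only [rename]
      rw [ih (ρ := liftRen ρ) (ρ' := liftRen ρ') (fun n => by cases n <;> simp [liftRen, h])]
  | app a b iha ihb => simp [rename, iha h, ihb h]
  | lett a b iha ihb =>
      simp only [rename]
      rw [iha h, ihb (ρ := liftRen ρ) (ρ' := liftRen ρ')
        (fun n => by cases n <;> simp [liftRen, h])]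

theorem rename_id' {ρ : ℕ → ℕ} (h : ∀ n, ρ n = n) (t : Tm) : rename ρ t = t := by
  induction t generalizing ρ with
  | var n => simp [rename, h]
  | unit => rfl
  | pair a b iha ihb => simp [rename, iha h, ihb h]
  | fst a ih => simp [rename, ih h]
  | snd a ih => simp [rename, ih h]
  | lam a ih =>
      simp only [rename]
      rw [ih (fun n => by cases n <;> simp [liftRen, h])]
  | app a b iha ihb => simp [rename, iha h, ihb h]
  | lett a b iha ihb =>
      simp only [rename]
      rw [iha h, ihb (fun n => by cases n <;> simp [liftRen, h])]

theorem rename_comp (ρ ρ' : ℕ → ℕ) (t : Tm) :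
    rename ρ' (rename ρ t) = rename (fun n => ρ' (ρ n)) t := by
  induction t generalizing ρ ρ' with
  | var n => rfl
  | unit => rfl
  | pair a b iha ihb => simp [rename, iha, ihb]
  | fst a ih => simp [rename, ih]
  | snd a ih => simp [rename, ih]
  | lam a ih =>
      simp only [rename, ih]
      exact congrArg Tm.lam (rename_ext (fun n => by cases n <;> simp [liftRen]) a)
  | app a b iha ihb => simp [rename, iha, ihb]
  | lett a b iha ihb =>
      simp only [rename, iha, ihb]
      refine congrArg (Tm.lett _) ?_
      exact rename_ext (fun n => by cases n <;> simp [liftRen]) b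

/-- Parallel substitutions. -/
def liftSub (σ : ℕ → Tm) : ℕ → Tm
  | 0 => .var 0
  | n + 1 => rename Nat.succ (σ n)

def psub (σ : ℕ → Tm) : Tm → Tm
  | .var n => σ n
  | .unit => .unit
  | .pair t u => .pair (psub σ t) (psub σ u)
  | .fst t => .fst (psub σ t)
  | .snd t => .snd (psub σ t)
  | .lam t => .lam (psub (liftSub σ) t)
  | .app t u => .app (psub σ t) (psub σ u)
  | .lett t u => .lett (psub σ t) (psub (liftSub σ) u)

theorem psub_ext {σ σ' : ℕ → Tm} (h : ∀ n, σ n = σ' n) : ∀ t, psub σ t = psub σ' t := by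
  intro t
  induction t generalizing σ σ' with
  | var n => simp [psub, h]
  | unit => rfl
  | pair a b iha ihb => simp [psub, iha h, ihb h]
  | fst a ih => simp [psub, ih h]
  | snd a ih => simp [psub, ih h]
  | lam a ih =>
      simp only [psub]
      rw [ih (σ := liftSub σ) (σ' := liftSub σ') (fun n => by cases n <;> simp [liftSub, h])]
  | app a b iha ihb => simp [psub, iha h, ihb h]
  | lett a b iha ihb =>
      simp only [psub]
      rw [iha h, ihb (σ := liftSub σ) (σ' := liftSub σ')
        (fun n => by cases n <;> simp [liftSub, h])]

theorem psub_var (ρ : ℕ → ℕ) (t : Tm) : psub (fun n => .var (ρ n)) t = rename ρ t := by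
  induction t generalizing ρ with
  | var n => rfl
  | unit => rfl
  | pair a b iha ihb => simp [psub, rename, iha, ihb]
  | fst a ih => simp [psub, rename, ih]
  | snd a ih => simp [psub, rename, ih]
  | lam a ih =>
      simp only [psub, rename]
      rw [psub_ext (σ' := fun n => .var (liftRen ρ n))
        (fun n => by cases n <;> simp [liftSub, liftRen, rename]) a, ih]
  | app a b iha ihb => simp [psub, rename, iha, ihb]
  | lett a b iha ihb =>
      simp only [psub, rename, iha]
      rw [psub_ext (σ' := fun n => .var (liftRen ρ n))
        (fun n => by cases n <;> simp [liftSub, liftRen, rename]) b, ihb]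

theorem psub_id (t : Tm) : psub Tm.var t = t := by
  have h := psub_var id t
  rw [show rename id t = t from rename_id' (fun _ => rfl) t] at h
  exact h

theorem psub_rename (σ : ℕ → Tm) (ρ : ℕ → ℕ) (t : Tm) :
    psub σ (rename ρ t) = psub (fun n => σ (ρ n)) t := by
  induction t generalizing σ ρ with
  | var n => rfl
  | unit => rfl
  | pair a b iha ihb => simp [psub, rename, iha, ihb]
  | fst a ih => simp [psub, rename, ih]
  | snd a ih => simp [psub, rename, ih]
  | lam a ih =>
      simp only [psub, rename, ih]
      refine congrArg Tm.lam ?_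
      exact psub_ext (fun n => by cases n <;> simp [liftSub, liftRen]) a
  | app a b iha ihb => simp [psub, rename, iha, ihb]
  | lett a b iha ihb =>
      simp only [psub, rename, iha, ihb]
      refine congrArg (Tm.lett _) ?_
      exact psub_ext (fun n => by cases n <;> simp [liftSub, liftRen]) b

theorem rename_psub (ρ : ℕ → ℕ) (σ : ℕ → Tm) (t : Tm) :
    rename ρ (psub σ t) = psub (fun n => rename ρ (σ n)) t := by
  induction t generalizing σ ρ with
  | var n => rfl
  | unit => rfl
  | pair a b iha ihb => simp [psub, rename, iha, ihb]
  | fst a ih => simp [psub, rename, ih]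
  | snd a ih => simp [psub, rename, ih]
  | lam a ih =>
      simp only [psub, rename, ih]
      refine congrArg Tm.lam ?_
      refine psub_ext (fun n => ?_) a
      cases n with
      | zero => rfl
      | succ n =>
          simp only [liftSub, rename_comp]
          exact rename_ext (fun m => by simp [liftRen]) _
  | app a b iha ihb => simp [psub, rename, iha, ihb]
  | lett a b iha ihb =>
      simp only [psub, rename, iha, ihb]
      refine congrArg (Tm.lett _) ?_
      refine psub_ext (fun n => ?_) b
      cases n with
      | zero => rfl
      | succ n =>
          simp only [liftSub, rename_comp]
          exact rename_ext (fun m => by simp [liftRen]) _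

theorem psub_psub (σ τ : ℕ → Tm) (t : Tm) :
    psub τ (psub σ t) = psub (fun n => psub τ (σ n)) t := by
  induction t generalizing σ τ with
  | var n => rfl
  | unit => rfl
  | pair a b iha ihb => simp [psub, iha, ihb]
  | fst a ih => simp [psub, ih]
  | snd a ih => simp [psub, ih]
  | lam a ih =>
      simp only [psub, ih]
      refine congrArg Tm.lam ?_
      refine psub_ext (fun n => ?_) a
      cases n with
      | zero => rfl
      | succ n =>
          simp only [liftSub, psub_rename, rename_psub]
  | app a b iha ihb => simp [psub, iha, ihb]
  | lett a b iha ihb =>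
      simp only [psub, iha, ihb]
      refine congrArg (Tm.lett _) ?_
      refine psub_ext (fun n => ?_) b
      cases n with
      | zero => rfl
      | succ n =>
          simp only [liftSub, psub_rename, rename_psub]

def scons (u : Tm) (σ : ℕ → Tm) : ℕ → Tm
  | 0 => u
  | n + 1 => σ n

/-- The single-variable substitution as a parallel substitution. -/
def ssig (k : ℕ) (u : Tm) : ℕ → Tm := fun n =>
  if n < k then .var n else if n = k then rename (· + k) u else .var (n - 1)

theorem liftSub_ssig (k : ℕ) (u : Tm) : ∀ n, liftSub (ssig k u) n = ssig (k + 1) u n := by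
  intro n
  cases n with
  | zero => simp [liftSub, ssig]
  | succ n =>
      by_cases h1 : n < k
      · simp [liftSub, ssig, h1, Nat.succ_lt_succ h1, rename]
      by_cases h2 : n = k
      · subst h2
        have h3 : ¬ (n + 1 < n + 1) := by omega
        simp only [liftSub, ssig, if_neg h1, if_neg h3, eq_self_iff_true, ite_true,
          rename_comp]
        exact rename_ext (fun m => by omega) u
      · have h3 : ¬ (n + 1 < k + 1) := by omega
        have h4 : ¬ (n + 1 = k + 1) := by omega
        simp only [liftSub, ssig, if_neg h1, if_neg h2, if_neg h3, if_neg h4, rename]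
        congr 1
        omega

theorem subst_eq_psub (k : ℕ) (u : Tm) (t : Tm) : subst k u t = psub (ssig k u) t := by
  induction t generalizing k with
  | var n => rfl
  | unit => rfl
  | pair a b iha ihb => simp [subst, psub, iha, ihb]
  | fst a ih => simp [subst, psub, ih]
  | snd a ih => simp [subst, psub, ih]
  | lam a ih =>
      simp only [subst, psub, ih]
      exact congrArg Tm.lam (psub_ext (fun n => (liftSub_ssig k u n).symm) a)
  | app a b iha ihb => simp [subst, psub, iha, ihb]
  | lett a b iha ihb =>
      simp only [subst, psub, iha, ihb]
      exact congrArg (Tm.lett _) (psub_ext (fun n => (liftSub_ssig k u n).symm) b)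

theorem subst0_eq (u t : Tm) : subst 0 u t = psub (scons u Tm.var) t := by
  rw [subst_eq_psub]
  refine psub_ext (fun n => ?_) t
  cases n with
  | zero =>
      simp only [ssig, Nat.lt_irrefl, if_neg (by omega : ¬ (0:ℕ) < 0), if_pos rfl, scons]
      exact rename_id' (fun n => by omega) u
  | succ n => simp [ssig, scons]
/-! ### Renamings and typing -/

def Ren (ρ : ℕ → ℕ) (Γ Δ : Ctx) : Prop :=
  ∀ n A, Γ[n]? = some A → Δ[ρ n]? = some A

theorem ren_lift {ρ Γ Δ} (h : Ren ρ Γ Δ) (A : Ty) : Ren (liftRen ρ) (A :: Γ) (A :: Δ) := by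
  intro n B hn
  cases n with
  | zero => simpa [liftRen] using hn
  | succ n => simpa [liftRen] using h n B (by simpa using hn)

theorem ren_succ (Γ : Ctx) (A : Ty) : Ren Nat.succ Γ (A :: Γ) := by
  intro n B hn; simpa using hn

theorem ren_id (Γ : Ctx) : Ren id Γ Γ := fun _ _ h => h

theorem ren_comp {ρ ρ' Γ Δ Θ} (h : Ren ρ Γ Δ) (h' : Ren ρ' Δ Θ) :
    Ren (fun n => ρ' (ρ n)) Γ Θ := fun n A hn => h' _ A (h n A hn)

theorem hasTy_rename {Γ t A} (ht : HasTy Γ t A) :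
    ∀ {Δ ρ}, Ren ρ Γ Δ → HasTy Δ (rename ρ t) A := by
  induction ht with
  | var h => exact fun hρ => HasTy.var (hρ _ _ h)
  | unit => exact fun _ => HasTy.unit
  | pair _ _ iha ihb => exact fun hρ => HasTy.pair (iha hρ) (ihb hρ)
  | fst _ ih => exact fun hρ => HasTy.fst (ih hρ)
  | snd _ ih => exact fun hρ => HasTy.snd (ih hρ)
  | lam _ ih => exact fun hρ => HasTy.lam (ih (ren_lift hρ _))
  | app _ _ iha ihb => exact fun hρ => HasTy.app (iha hρ) (ihb hρ)
  | lett _ _ iha ihb => exact fun hρ => HasTy.lett (iha hρ) (ihb (ren_lift hρ _))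

/-- Well-typedness of a parallel substitution. -/
def SubTy (σ : ℕ → Tm) (Γ Δ : Ctx) : Prop :=
  ∀ n A, Γ[n]? = some A → HasTy Δ (σ n) A

theorem subTy_lift {σ Γ Δ} (h : SubTy σ Γ Δ) (A : Ty) :
    SubTy (liftSub σ) (A :: Γ) (A :: Δ) := by
  intro n B hn
  cases n with
  | zero => exact HasTy.var (by simpa [liftSub] using hn)
  | succ n =>
      simp only [liftSub]
      exact hasTy_rename (h n B (by simpa using hn)) (ren_succ Δ A)

theorem hasTy_psub {Γ t A} (ht : HasTy Γ t A) :
    ∀ {Δ σ}, SubTy σ Γ Δ → HasTy Δ (psub σ t) A := by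
  induction ht with
  | var h => exact fun hσ => hσ _ _ h
  | unit => exact fun _ => HasTy.unit
  | pair _ _ iha ihb => exact fun hσ => HasTy.pair (iha hσ) (ihb hσ)
  | fst _ ih => exact fun hσ => HasTy.fst (ih hσ)
  | snd _ ih => exact fun hσ => HasTy.snd (ih hσ)
  | lam _ ih => exact fun hσ => HasTy.lam (ih (subTy_lift hσ _))
  | app _ _ iha ihb => exact fun hσ => HasTy.app (iha hσ) (ihb hσ)
  | lett _ _ iha ihb => exact fun hσ => HasTy.lett (iha hσ) (ihb (subTy_lift hσ _))

theorem subTy_scons {Γ Δ u A σ} (hu : HasTy Δ u A) (hσ : SubTy σ Γ Δ) :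
    SubTy (scons u σ) (A :: Γ) Δ := by
  intro n B hn
  cases n with
  | zero =>
      have : A = B := by simpa using hn
      subst this; simpa [scons] using hu
  | succ n => exact hσ n B (by simpa using hn)

theorem subTy_var (Γ : Ctx) : SubTy Tm.var Γ Γ := fun n A h => HasTy.var h

theorem hasTy_subst0 {Γ t u A B} (ht : HasTy (B :: Γ) t A) (hu : HasTy Γ u B) :
    HasTy Γ (subst 0 u t) A := by
  rw [subst0_eq]
  exact hasTy_psub ht (subTy_scons hu (subTy_var Γ))

theorem eq_hasTy {Γ t u A} (h : EqTm Γ t u A) : HasTy Γ t A ∧ HasTy Γ u A := by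
  induction h with
  | refl h => exact ⟨h, h⟩
  | symm _ ih => exact ⟨ih.2, ih.1⟩
  | trans _ _ ih1 ih2 => exact ⟨ih1.1, ih2.2⟩
  | pair_congr _ _ ih1 ih2 => exact ⟨HasTy.pair ih1.1 ih2.1, HasTy.pair ih1.2 ih2.2⟩
  | fst_congr _ ih => exact ⟨HasTy.fst ih.1, HasTy.fst ih.2⟩
  | snd_congr _ ih => exact ⟨HasTy.snd ih.1, HasTy.snd ih.2⟩
  | lam_congr _ ih => exact ⟨HasTy.lam ih.1, HasTy.lam ih.2⟩
  | app_congr _ _ ih1 ih2 => exact ⟨HasTy.app ih1.1 ih2.1, HasTy.app ih1.2 ih2.2⟩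
  | lett_congr _ _ ih1 ih2 => exact ⟨HasTy.lett ih1.1 ih2.1, HasTy.lett ih1.2 ih2.2⟩
  | unit_eta h => exact ⟨h, HasTy.unit⟩
  | prod_beta1 h1 h2 => exact ⟨HasTy.fst (HasTy.pair h1 h2), h1⟩
  | prod_beta2 h1 h2 => exact ⟨HasTy.snd (HasTy.pair h1 h2), h2⟩
  | prod_eta h => exact ⟨h, HasTy.pair (HasTy.fst h) (HasTy.snd h)⟩
  | arr_beta h1 h2 => exact ⟨HasTy.app (HasTy.lam h1) h2, hasTy_subst0 h1 h2⟩
  | arr_eta h =>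
      exact ⟨h, HasTy.lam (HasTy.app (hasTy_rename h (ren_succ _ _)) (HasTy.var rfl))⟩
  | dia_eta h => exact ⟨h, HasTy.lett h (HasTy.var rfl)⟩
  | @dia_beta Γ t u u' A B C h1 h2 h3 =>
      refine ⟨HasTy.lett (HasTy.lett h1 h2) h3, HasTy.lett h1 (hasTy_subst0 ?_ h2)⟩
      refine hasTy_rename h3 ?_
      intro n D hn
      cases n with
      | zero => simpa [liftRen] using hn
      | succ n => simpa [liftRen] using hn
/-! ### Renaming preserves the equational theory -/

theorem rename_subst0 (ρ : ℕ → ℕ) (u t : Tm) :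
    rename ρ (subst 0 u t) = subst 0 (rename ρ u) (rename (liftRen ρ) t) := by
  rw [subst0_eq, subst0_eq, rename_psub, psub_rename]
  refine psub_ext (fun n => ?_) t
  cases n <;> simp [liftRen, scons, rename]

theorem rename_diasubst (ρ : ℕ → ℕ) (u u' : Tm) :
    rename (liftRen ρ) (subst 0 u (rename (liftRen Nat.succ) u')) =
      subst 0 (rename (liftRen ρ) u)
        (rename (liftRen Nat.succ) (rename (liftRen ρ) u')) := by
  rw [subst0_eq, subst0_eq, psub_rename, rename_psub, rename_comp, psub_rename]
  refine psub_ext (fun n => ?_) u'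
  cases n <;> simp [liftRen, scons, rename]

theorem eq_rename {Γ t u A} (h : EqTm Γ t u A) :
    ∀ {Δ ρ}, Ren ρ Γ Δ → EqTm Δ (rename ρ t) (rename ρ u) A := by
  induction h with
  | refl h => exact fun hρ => EqTm.refl (hasTy_rename h hρ)
  | symm _ ih => exact fun hρ => EqTm.symm (ih hρ)
  | trans _ _ ih1 ih2 => exact fun hρ => EqTm.trans (ih1 hρ) (ih2 hρ)
  | pair_congr _ _ ih1 ih2 => exact fun hρ => EqTm.pair_congr (ih1 hρ) (ih2 hρ)
  | fst_congr _ ih => exact fun hρ => EqTm.fst_congr (ih hρ)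
  | snd_congr _ ih => exact fun hρ => EqTm.snd_congr (ih hρ)
  | lam_congr _ ih => exact fun hρ => EqTm.lam_congr (ih (ren_lift hρ _))
  | app_congr _ _ ih1 ih2 => exact fun hρ => EqTm.app_congr (ih1 hρ) (ih2 hρ)
  | lett_congr _ _ ih1 ih2 =>
      exact fun hρ => EqTm.lett_congr (ih1 hρ) (ih2 (ren_lift hρ _))
  | unit_eta h => exact fun hρ => EqTm.unit_eta (hasTy_rename h hρ)
  | prod_beta1 h1 h2 =>
      exact fun hρ => EqTm.prod_beta1 (hasTy_rename h1 hρ) (hasTy_rename h2 hρ)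
  | prod_beta2 h1 h2 =>
      exact fun hρ => EqTm.prod_beta2 (hasTy_rename h1 hρ) (hasTy_rename h2 hρ)
  | prod_eta h => exact fun hρ => EqTm.prod_eta (hasTy_rename h hρ)
  | arr_beta h1 h2 =>
      intro Δ ρ hρ
      have := EqTm.arr_beta (hasTy_rename h1 (ren_lift hρ _)) (hasTy_rename h2 hρ)
      simpa [rename, rename_subst0] using this
  | @arr_eta Γ' t' A' B' h =>
      intro Δ ρ hρ
      have h2 := EqTm.arr_eta (hasTy_rename h hρ)
      have e : rename (liftRen ρ) (rename Nat.succ t') = rename Nat.succ (rename ρ t') := by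
        rw [rename_comp, rename_comp]
        exact rename_ext (fun n => by simp [liftRen]) _
      simpa [rename, e, liftRen] using h2
  | dia_eta h =>
      intro Δ ρ hρ
      have := EqTm.dia_eta (hasTy_rename h hρ)
      simpa [rename, liftRen] using this
  | @dia_beta Γ t u u' A B C h1 h2 h3 =>
      intro Δ ρ hρ
      have := EqTm.dia_beta (hasTy_rename h1 hρ) (hasTy_rename h2 (ren_lift hρ _))
        (hasTy_rename h3 (ren_lift hρ _))
      simpa [rename, rename_diasubst] using this
/-! ### Neutral/normal forms: renaming and typing -/

theorem neu_nf_rename_aux :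
    (∀ {Γ t A}, Neu Γ t A → ∀ Δ ρ, Ren ρ Γ Δ → Neu Δ (rename ρ t) A) ∧
    (∀ {Γ t A}, Nf Γ t A → ∀ Δ ρ, Ren ρ Γ Δ → Nf Δ (rename ρ t) A) := by
  refine ⟨fun {Γ t A} h => ?_, fun {Γ t A} h => ?_⟩ <;>
  [skip; skip] <;>
  first
  | exact Neu.rec (motive_1 := fun Γ t A _ => ∀ Δ ρ, Ren ρ Γ Δ → Neu Δ (rename ρ t) A)
      (motive_2 := fun Γ t A _ => ∀ Δ ρ, Ren ρ Γ Δ → Nf Δ (rename ρ t) A)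
      (fun h _ _ hρ => Neu.var (hρ _ _ h))
      (fun _ ih _ _ hρ => Neu.fst (ih _ _ hρ))
      (fun _ ih _ _ hρ => Neu.snd (ih _ _ hρ))
      (fun _ _ ih1 ih2 _ _ hρ => Neu.app (ih1 _ _ hρ) (ih2 _ _ hρ))
      (fun _ ih _ _ hρ => Nf.up (ih _ _ hρ))
      (fun _ _ _ => Nf.unit)
      (fun _ _ ih1 ih2 _ _ hρ => Nf.pair (ih1 _ _ hρ) (ih2 _ _ hρ))
      (fun _ ih _ _ hρ => Nf.lam (ih _ _ (ren_lift hρ _)))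
      (fun _ _ ih1 ih2 _ _ hρ => Nf.lett (ih1 _ _ hρ) (ih2 _ _ (ren_lift hρ _)))
      h
  | exact Nf.rec (motive_1 := fun Γ t A _ => ∀ Δ ρ, Ren ρ Γ Δ → Neu Δ (rename ρ t) A)
      (motive_2 := fun Γ t A _ => ∀ Δ ρ, Ren ρ Γ Δ → Nf Δ (rename ρ t) A)
      (fun h _ _ hρ => Neu.var (hρ _ _ h))
      (fun _ ih _ _ hρ => Neu.fst (ih _ _ hρ))
      (fun _ ih _ _ hρ => Neu.snd (ih _ _ hρ))
      (fun _ _ ih1 ih2 _ _ hρ => Neu.app (ih1 _ _ hρ) (ih2 _ _ hρ))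
      (fun _ ih _ _ hρ => Nf.up (ih _ _ hρ))
      (fun _ _ _ => Nf.unit)
      (fun _ _ ih1 ih2 _ _ hρ => Nf.pair (ih1 _ _ hρ) (ih2 _ _ hρ))
      (fun _ ih _ _ hρ => Nf.lam (ih _ _ (ren_lift hρ _)))
      (fun _ _ ih1 ih2 _ _ hρ => Nf.lett (ih1 _ _ hρ) (ih2 _ _ (ren_lift hρ _)))
      h

theorem neu_rename {Γ t A Δ ρ} (h : Neu Γ t A) (hρ : Ren ρ Γ Δ) : Neu Δ (rename ρ t) A :=
  neu_nf_rename_aux.1 h Δ ρ hρ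

theorem nf_rename {Γ t A Δ ρ} (h : Nf Γ t A) (hρ : Ren ρ Γ Δ) : Nf Δ (rename ρ t) A :=
  neu_nf_rename_aux.2 h Δ ρ hρ

theorem neu_hasTy {Γ t A} (h : Neu Γ t A) : HasTy Γ t A :=
  Neu.rec (motive_1 := fun Γ t A _ => HasTy Γ t A) (motive_2 := fun Γ t A _ => HasTy Γ t A)
    (fun h => HasTy.var h) (fun _ ih => HasTy.fst ih) (fun _ ih => HasTy.snd ih)
    (fun _ _ ih1 ih2 => HasTy.app ih1 ih2) (fun _ ih => ih) HasTy.unit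
    (fun _ _ ih1 ih2 => HasTy.pair ih1 ih2) (fun _ ih => HasTy.lam ih)
    (fun _ _ ih1 ih2 => HasTy.lett ih1 ih2) h

theorem nf_hasTy {Γ t A} (h : Nf Γ t A) : HasTy Γ t A :=
  Nf.rec (motive_1 := fun Γ t A _ => HasTy Γ t A) (motive_2 := fun Γ t A _ => HasTy Γ t A)
    (fun h => HasTy.var h) (fun _ ih => HasTy.fst ih) (fun _ ih => HasTy.snd ih)
    (fun _ _ ih1 ih2 => HasTy.app ih1 ih2) (fun _ ih => ih) HasTy.unit
    (fun _ _ ih1 ih2 => HasTy.pair ih1 ih2) (fun _ ih => HasTy.lam ih)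
    (fun _ _ ih1 ih2 => HasTy.lett ih1 ih2) h
/-! ### The logical relation -/

def R : Ty → Ctx → Tm → Prop
  | .base, Γ, t => ∃ n, Nf Γ n .base ∧ EqTm Γ t n .base
  | .unit, Γ, t => HasTy Γ t .unit
  | .prod A B, Γ, t => HasTy Γ t (.prod A B) ∧ R A Γ (.fst t) ∧ R B Γ (.snd t)
  | .arr A B, Γ, t => HasTy Γ t (.arr A B) ∧
      ∀ Δ ρ, Ren ρ Γ Δ → ∀ u, R A Δ u → R B Δ (.app (rename ρ t) u)
  | .dia A, Γ, t => HasTy Γ t (.dia A) ∧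
      ∃ A' n u, Neu Γ n (.dia A') ∧ R A (A' :: Γ) u ∧ EqTm Γ t (.lett n u) (.dia A)

theorem R_hasTy : ∀ {A Γ t}, R A Γ t → HasTy Γ t A := by
  intro A
  induction A with
  | base => exact fun ⟨n, _, he⟩ => (eq_hasTy he).1
  | unit => exact fun h => h
  | prod A B _ _ => exact fun h => h.1
  | arr A B _ _ => exact fun h => h.1
  | dia A _ => exact fun h => h.1

theorem R_resp : ∀ {A Γ t t'}, EqTm Γ t t' A → R A Γ t → R A Γ t' := by
  intro A
  induction A with
  | base => exact fun h ⟨n, hn, he⟩ => ⟨n, hn, EqTm.trans (EqTm.symm h) he⟩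
  | unit => exact fun h _ => (eq_hasTy h).2
  | prod A B ihA ihB =>
      rintro Γ t t' h ⟨ht, h1, h2⟩
      exact ⟨(eq_hasTy h).2, ihA (EqTm.fst_congr h) h1, ihB (EqTm.snd_congr h) h2⟩
  | arr A B ihA ihB =>
      rintro Γ t t' h ⟨ht, k⟩
      refine ⟨(eq_hasTy h).2, fun Δ ρ hρ u hu => ?_⟩
      exact ihB (EqTm.app_congr (eq_rename h hρ) (EqTm.refl (R_hasTy hu))) (k Δ ρ hρ u hu)
  | dia A ihA =>
      rintro Γ t t' h ⟨ht, A', n, u, hn, hu, he⟩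
      exact ⟨(eq_hasTy h).2, A', n, u, hn, hu, EqTm.trans (EqTm.symm h) he⟩

theorem R_rename : ∀ {A Γ t Δ ρ}, Ren ρ Γ Δ → R A Γ t → R A Δ (rename ρ t) := by
  intro A
  induction A with
  | base =>
      rintro Γ t Δ ρ hρ ⟨n, hn, he⟩
      exact ⟨rename ρ n, nf_rename hn hρ, eq_rename he hρ⟩
  | unit => exact fun hρ h => hasTy_rename h hρ
  | prod A B ihA ihB =>
      rintro Γ t Δ ρ hρ ⟨ht, h1, h2⟩
      exact ⟨hasTy_rename ht hρ, ihA hρ h1, ihB hρ h2⟩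
  | arr A B ihA ihB =>
      rintro Γ t Δ ρ hρ ⟨ht, k⟩
      refine ⟨hasTy_rename ht hρ, fun Θ ρ' hρ' u hu => ?_⟩
      rw [show rename ρ t = rename ρ t from rfl]
      have := k Θ (fun n => ρ' (ρ n)) (ren_comp hρ hρ') u hu
      rwa [← rename_comp] at this
  | dia A ihA =>
      rintro Γ t Δ ρ hρ ⟨ht, A', n, u, hn, hu, he⟩
      refine ⟨hasTy_rename ht hρ, A', rename ρ n, rename (liftRen ρ) u,
        neu_rename hn hρ, ihA (ren_lift hρ A') hu, ?_⟩
      exact eq_rename he hρ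

theorem reflect_reify (A : Ty) :
    (∀ {Γ t}, Neu Γ t A → R A Γ t) ∧
    (∀ {Γ t}, R A Γ t → ∃ n, Nf Γ n A ∧ EqTm Γ t n A) := by
  induction A with
  | base =>
      refine ⟨fun h => ⟨_, Nf.up h, EqTm.refl (neu_hasTy h)⟩, fun h => h⟩
  | unit =>
      exact ⟨fun h => neu_hasTy h, fun h => ⟨.unit, Nf.unit, EqTm.unit_eta h⟩⟩
  | prod A B ihA ihB =>
      constructor
      · intro Γ t h
        exact ⟨neu_hasTy h, ihA.1 (Neu.fst h), ihB.1 (Neu.snd h)⟩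
      · rintro Γ t ⟨ht, h1, h2⟩
        obtain ⟨n1, hn1, he1⟩ := ihA.2 h1
        obtain ⟨n2, hn2, he2⟩ := ihB.2 h2
        exact ⟨.pair n1 n2, Nf.pair hn1 hn2,
          EqTm.trans (EqTm.prod_eta ht) (EqTm.pair_congr he1 he2)⟩
  | arr A B ihA ihB =>
      constructor
      · intro Γ t h
        refine ⟨neu_hasTy h, fun Δ ρ hρ u hu => ?_⟩
        obtain ⟨m, hm, he⟩ := ihA.2 hu
        have hne : Neu Δ (.app (rename ρ t) m) B := Neu.app (neu_rename h hρ) hm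
        refine R_resp ?_ (ihB.1 hne)
        exact EqTm.app_congr (EqTm.refl (hasTy_rename (neu_hasTy h) hρ)) (EqTm.symm he)
      · rintro Γ t ⟨ht, k⟩
        have hu : R A (A :: Γ) (.var 0) := ihA.1 (Neu.var rfl)
        have hr := k (A :: Γ) Nat.succ (ren_succ Γ A) (.var 0) hu
        obtain ⟨m, hm, he⟩ := ihB.2 hr
        exact ⟨.lam m, Nf.lam hm, EqTm.trans (EqTm.arr_eta ht) (EqTm.lam_congr he)⟩
  | dia A ihA =>
      constructor
      · intro Γ t h
        exact ⟨neu_hasTy h, A, t, .var 0, h, ihA.1 (Neu.var rfl),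
          EqTm.dia_eta (neu_hasTy h)⟩
      · rintro Γ t ⟨ht, A', n, u, hn, hu, he⟩
        obtain ⟨m, hm, hem⟩ := ihA.2 hu
        exact ⟨.lett n m, Nf.lett hn hm,
          EqTm.trans he (EqTm.lett_congr (EqTm.refl (neu_hasTy hn)) hem)⟩

theorem reflect {A Γ t} (h : Neu Γ t A) : R A Γ t := (reflect_reify A).1 h
theorem reify {A Γ t} (h : R A Γ t) : ∃ n, Nf Γ n A ∧ EqTm Γ t n A := (reflect_reify A).2 h

/-! ### The fundamental lemma -/

def EnvR (σ : ℕ → Tm) (Γ Δ : Ctx) : Prop :=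
  ∀ n A, Γ[n]? = some A → R A Δ (σ n)

theorem subTy_of_envR {σ Γ Δ} (h : EnvR σ Γ Δ) : SubTy σ Γ Δ :=
  fun n A hn => R_hasTy (h n A hn)

theorem envR_scons {σ Γ Δ u A} (hu : R A Δ u) (hσ : EnvR σ Γ Δ) :
    EnvR (scons u σ) (A :: Γ) Δ := by
  intro n B hn
  cases n with
  | zero =>
      have : A = B := by simpa using hn
      subst this; exact hu
  | succ n => exact hσ n B (by simpa using hn)

theorem envR_rename {σ Γ Δ Θ ρ} (hρ : Ren ρ Δ Θ) (hσ : EnvR σ Γ Δ) :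
    EnvR (fun n => rename ρ (σ n)) Γ Θ :=
  fun n A hn => R_rename hρ (hσ n A hn)

theorem beta_sub_eq (ρ : ℕ → ℕ) (σ : ℕ → Tm) (u t : Tm) :
    subst 0 u (rename (liftRen ρ) (psub (liftSub σ) t)) =
      psub (scons u (fun k => rename ρ (σ k))) t := by
  rw [subst0_eq, rename_psub, psub_psub]
  refine psub_ext (fun n => ?_) t
  cases n with
  | zero => rfl
  | succ n =>
      simp only [liftSub, rename_comp, psub_rename]
      rw [show (fun m => scons u Tm.var (liftRen ρ (Nat.succ m))) =
            (fun m => Tm.var (ρ m)) from funext (fun m => by simp [liftRen, scons]),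
        psub_var]
      rfl

theorem lett_sub_eq (σ : ℕ → Tm) (w u : Tm) :
    subst 0 w (rename (liftRen Nat.succ) (psub (liftSub σ) u)) =
      psub (scons w (fun k => rename Nat.succ (σ k))) u :=
  beta_sub_eq Nat.succ σ w u

theorem fundamental {Γ t A} (ht : HasTy Γ t A) :
    ∀ {Δ σ}, EnvR σ Γ Δ → R A Δ (psub σ t) := by
  induction ht with
  | var h => exact fun hσ => hσ _ _ h
  | unit => exact fun _ => HasTy.unit
  | @pair Γ t u A B h1 h2 ih1 ih2 =>
      intro Δ σ hσ
      have r1 := ih1 hσ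
      have r2 := ih2 hσ
      have ht1 := R_hasTy r1
      have ht2 := R_hasTy r2
      refine ⟨HasTy.pair ht1 ht2, ?_, ?_⟩
      · exact R_resp (EqTm.symm (EqTm.prod_beta1 ht1 ht2)) r1
      · exact R_resp (EqTm.symm (EqTm.prod_beta2 ht1 ht2)) r2
  | fst _ ih => exact fun hσ => (ih hσ).2.1
  | snd _ ih => exact fun hσ => (ih hσ).2.2
  | @lam Γ t A B h ih =>
      intro Δ σ hσ
      have htlam : HasTy (A :: Δ) (psub (liftSub σ) t) B :=
        hasTy_psub h (subTy_lift (subTy_of_envR hσ) A)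
      refine ⟨HasTy.lam htlam, ?_⟩
      intro Θ ρ hρ u hu
      have hσ' : EnvR (scons u (fun k => rename ρ (σ k))) (A :: Γ) Θ :=
        envR_scons hu (envR_rename hρ hσ)
      have hr := ih hσ'
      have hX : HasTy (A :: Θ) (rename (liftRen ρ) (psub (liftSub σ) t)) B :=
        hasTy_rename htlam (ren_lift hρ A)
      have hb := EqTm.arr_beta hX (R_hasTy hu)
      rw [beta_sub_eq] at hb
      exact R_resp (EqTm.symm hb) hr
  | @app Γ t u A B h1 h2 ih1 ih2 =>
      intro Δ σ hσ
      have := (ih1 hσ).2 Δ id (ren_id Δ) (psub σ u) (ih2 hσ)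
      rwa [show rename id (psub σ t) = psub σ t from rename_id' (fun _ => rfl) _] at this
  | @lett Γ t u A B h1 h2 ih1 ih2 =>
      intro Δ σ hσ
      obtain ⟨ht', A', n, w, hn, hw, he⟩ := ih1 hσ
      have htu : HasTy (A :: Δ) (psub (liftSub σ) u) B :=
        hasTy_psub h2 (subTy_lift (subTy_of_envR hσ) A)
      have hσ' : EnvR (scons w (fun k => rename Nat.succ (σ k))) (A :: Γ) (A' :: Δ) :=
        envR_scons hw (envR_rename (ren_succ Δ A') hσ)
      have hu' := ih2 hσ'
      refine ⟨HasTy.lett ht' htu, A', n, _, hn, hu', ?_⟩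
      have step1 : EqTm Δ (.lett (psub σ t) (psub (liftSub σ) u))
          (.lett (.lett n w) (psub (liftSub σ) u)) (.dia B) :=
        EqTm.lett_congr he (EqTm.refl htu)
      have step2 := EqTm.dia_beta (neu_hasTy hn) (R_hasTy hw) htu
      rw [lett_sub_eq] at step2
      exact EqTm.trans step1 step2

theorem envR_var (Γ : Ctx) : EnvR Tm.var Γ Γ := fun _ _ h => reflect (Neu.var h)

/-- correctness of normalization for SLC: every well-typed term
`Γ ⊢ t : A` has a normal form `Γ ⊢nf n : A` with `Γ ⊢ t ≡ n : A`. -/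
theorem normalization_correct_SLC {Γ : Ctx} {t : Tm} {A : Ty}
    (ht : HasTy Γ t A) : ∃ n : Tm, Nf Γ n A ∧ EqTm Γ t n A := by
  have h := fundamental ht (envR_var Γ)
  rw [psub_id] at h
  exact reify h
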